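/- Equality P(R) = (2l + |Z(R)| - 1)/l² holds in the lower bound if and only if every nonzero zero-divisor x of R satisfies |Ann(x)| = 2. -/
import Mathlib

open Finset

theorem stmt_15 (R : Type*) [CommRing R] [Fintype R] [Nontrivial R] [DecidableEq R]
    (l : ℕ) (hl : Fintype.card R = l) :
    (((Finset.univ.filter fun p : R × R => p.1 * p.2 = 0).card : ℚ) / (l : ℚ) ^ 2 =
        (2 * l + (Finset.univ.filter fun x : R =>
          x ≠ 0 ∧ ∃ y : R, y ≠ 0 ∧ x * y = 0).card - 1) / (l : ℚ) ^ 2) ↔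
      ∀ x : R, (x ≠ 0 ∧ ∃ y : R, y ≠ 0 ∧ x * y = 0) →
        (Finset.univ.filter fun y : R => x * y = 0).card = 2 := by
  classical
  set a : R → ℕ := fun x => (Finset.univ.filter fun y : R => x * y = 0).card with ha
  set Z : Finset R := Finset.univ.filter fun x : R =>
      x ≠ 0 ∧ ∃ y : R, y ≠ 0 ∧ x * y = 0 with hZ
  have hl0 : 0 < l := hl ▸ Fintype.card_pos
  have hc : ((l : ℚ) ^ 2) ≠ 0 := by positivity
  -- N as a sum
  have hN : (Finset.univ.filter fun p : R × R => p.1 * p.2 = 0).card = ∑ x : R, a x := by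
    rw [Finset.card_filter, ← Finset.univ_product_univ, Finset.sum_product]
    exact Finset.sum_congr rfl fun x _ => (Finset.card_filter _ _).symm
  -- value at 0
  have ha0 : a 0 = l := by
    simp only [ha]
    rw [show (Finset.univ.filter fun y : R => (0:R) * y = 0) = Finset.univ by
      simp]
    simpa using hl
  -- value off Z
  have ha1 : ∀ x : R, x ≠ 0 → x ∉ Z → a x = 1 := by
    intro x hx hxZ
    simp only [hZ, Finset.mem_filter, Finset.mem_univ, true_and, not_and, not_exists] at hxZ
    have hfe : (Finset.univ.filter fun y : R => x * y = 0) = {0} := by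
      ext y
      simp only [Finset.mem_filter, Finset.mem_univ, true_and, Finset.mem_singleton]
      constructor
      · intro hxy
        by_contra hy
        exact hxZ hx y hy hxy
      · rintro rfl; exact mul_zero x
    simp [ha, hfe]
  -- lower bound on Z
  have ha2 : ∀ x ∈ Z, 2 ≤ a x := by
    intro x hx
    simp only [hZ, Finset.mem_filter, Finset.mem_univ, true_and] at hx
    obtain ⟨hx0, y, hy0, hxy⟩ := hx
    have hsub : ({0, y} : Finset R) ⊆ Finset.univ.filter fun z : R => x * z = 0 := by
      intro z hz
      simp only [Finset.mem_insert, Finset.mem_singleton] at hz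
      rcases hz with rfl | rfl <;> simp [hxy]
    have : ({0, y} : Finset R).card = 2 := by
      rw [Finset.card_insert_of_notMem (by simpa using hy0.symm)]
      simp
    calc 2 = ({0, y} : Finset R).card := this.symm
      _ ≤ _ := Finset.card_le_card hsub
  have hZsub : Z ⊆ Finset.univ.erase 0 := by
    intro x hx
    simp only [hZ, Finset.mem_filter, Finset.mem_univ, true_and] at hx
    simp [hx.1]
  have hcarde : (Finset.univ.erase (0:R)).card = l - 1 := by
    rw [Finset.card_erase_of_mem (Finset.mem_univ 0)]
    simp [hl]
  have hZle : Z.card ≤ l - 1 := hcarde ▸ Finset.card_le_card hZsub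
  -- sum decomposition
  have hsplit : ∑ x : R, a x = l + (∑ x ∈ Z, a x) + (l - 1 - Z.card) := by
    rw [← Finset.sum_erase_add Finset.univ a (Finset.mem_univ 0), ha0,
      ← Finset.sum_sdiff hZsub]
    have hW : ∑ x ∈ Finset.univ.erase 0 \ Z, a x = (l - 1 - Z.card) := by
      have h1 : ∀ x ∈ Finset.univ.erase 0 \ Z, a x = 1 := fun x hx => by
        rw [Finset.mem_sdiff, Finset.mem_erase] at hx
        exact ha1 x hx.1.1 hx.2
      rw [Finset.sum_congr rfl h1, Finset.sum_const, smul_eq_mul, mul_one,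
        Finset.card_sdiff_of_subset hZsub, hcarde]
    rw [hW]; ring
  -- rational reduction
  rw [div_left_inj' hc, hN]
  have hcast : ((∑ x : R, a x : ℕ) : ℚ)
      = 2 * l - 1 - Z.card + ∑ x ∈ Z, (a x : ℚ) := by
    rw [hsplit]
    push_cast [Nat.cast_sub hZle, Nat.cast_sub hl0]
    ring
  rw [hcast]
  have hiff : (2 * (l:ℚ) - 1 - Z.card + ∑ x ∈ Z, (a x : ℚ)
      = 2 * l + Z.card - 1) ↔ (∑ x ∈ Z, (a x : ℚ)) = 2 * Z.card := by
    constructor <;> intro h <;> linarith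
  rw [hiff]
  have : (∑ x ∈ Z, (a x : ℚ)) = ((∑ x ∈ Z, a x : ℕ) : ℚ) := by push_cast; ring
  rw [this, show (2 * (Z.card : ℚ)) = ((2 * Z.card : ℕ) : ℚ) by push_cast; ring, Nat.cast_inj,
    show 2 * Z.card = ∑ _x ∈ Z, 2 by rw [Finset.sum_const, smul_eq_mul, mul_comm], eq_comm,
    Finset.sum_eq_sum_iff_of_le ha2]
  constructor
  · intro h x hx
    exact (h x (by simp [hZ, hx])).symm
  · intro h x hx
    have hx' : x ≠ 0 ∧ ∃ y : R, y ≠ 0 ∧ x * y = 0 := by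
      simpa [hZ] using hx
    exact (h x hx').symm
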